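/- Let k ≥ 0 be even and m ≥ 0 integers, b(θ) = kθ/2 − 2πm·cos(θ), b_*(θ) = (k+12)θ/2 − 2πm·cos(θ). Suppose α₁ < β₁ < α₂ < β₂ < α₃ are points of (π/2, 2π/3) where α₁, α₂, α₃ are consecutive zeros of cos(b_*) and β₁, β₂ are consecutive zeros of cos(b). Then β₁ − α₁ < β₂ − α₂ and α₂ − β₁ > α₃ − β₂. -/

import Mathlib

open Real Set

private lemma consec_aux (f : ℝ → ℝ) (a c : ℝ) (hac : a < c)
    (hcont : ContinuousOn f (Icc a c)) (hlt : f a < f c)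
    (hza : Real.cos (f a) = 0) (hzc : Real.cos (f c) = 0)
    (hno : ∀ θ ∈ Ioo a c, Real.cos (f θ) ≠ 0) : f c = f a + π := by
  have hπ := Real.pi_pos
  obtain ⟨n, hn⟩ := Real.cos_eq_zero_iff.1 hza
  obtain ⟨p, hp⟩ := Real.cos_eq_zero_iff.1 hzc
  have hnp : n < p := by
    by_contra h
    push_neg at h
    have hple : (p : ℝ) ≤ (n : ℝ) := by exact_mod_cast h
    rw [hn, hp] at hlt
    nlinarith
  by_cases hpe : p = n + 1
  · rw [hp, hn, hpe]; push_cast; ring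
  · exfalso
    have hp2 : n + 2 ≤ p := by omega
    have hp2' : (n : ℝ) + 2 ≤ (p : ℝ) := by exact_mod_cast hp2
    set z : ℝ := (2 * ((n : ℝ) + 1) + 1) * π / 2 with hzdef
    have hz1 : f a < z := by rw [hn]; nlinarith
    have hz2 : z < f c := by rw [hp]; nlinarith
    obtain ⟨t, ht, hft⟩ := intermediate_value_Ioo hac.le hcont ⟨hz1, hz2⟩
    apply hno t ht
    rw [hft]
    exact Real.cos_eq_zero_iff.2 ⟨n + 1, by push_cast; ring⟩

set_option maxHeartbeats 1000000 in
theorem stmt9 (k m : ℤ) (hk : 0 ≤ k) (hke : Even k) (hm : 0 ≤ m)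
    (b bstar : ℝ → ℝ)
    (hb : ∀ θ, b θ = (k : ℝ) * θ / 2 - 2 * π * (m : ℝ) * Real.cos θ)
    (hbstar : ∀ θ, bstar θ = ((k : ℝ) + 12) * θ / 2 - 2 * π * (m : ℝ) * Real.cos θ)
    (α₁ β₁ α₂ β₂ α₃ : ℝ)
    (hmem : α₁ ∈ Set.Ioo (π / 2) (2 * π / 3) ∧ β₁ ∈ Set.Ioo (π / 2) (2 * π / 3) ∧
      α₂ ∈ Set.Ioo (π / 2) (2 * π / 3) ∧ β₂ ∈ Set.Ioo (π / 2) (2 * π / 3) ∧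
      α₃ ∈ Set.Ioo (π / 2) (2 * π / 3))
    (hord : α₁ < β₁ ∧ β₁ < α₂ ∧ α₂ < β₂ ∧ β₂ < α₃)
    (hzα : Real.cos (bstar α₁) = 0 ∧ Real.cos (bstar α₂) = 0 ∧ Real.cos (bstar α₃) = 0)
    (hconsα₁ : ∀ θ ∈ Set.Ioo α₁ α₂, Real.cos (bstar θ) ≠ 0)
    (hconsα₂ : ∀ θ ∈ Set.Ioo α₂ α₃, Real.cos (bstar θ) ≠ 0)
    (hzβ : Real.cos (b β₁) = 0 ∧ Real.cos (b β₂) = 0)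
    (hconsβ : ∀ θ ∈ Set.Ioo β₁ β₂, Real.cos (b θ) ≠ 0) :
    β₁ - α₁ < β₂ - α₂ ∧ α₂ - β₁ > α₃ - β₂ := by
  obtain ⟨hm1, hm2, hm3, hm4, hm5⟩ := hmem
  obtain ⟨h12, h23, h34, h45⟩ := hord
  obtain ⟨hz1, hz2, hz3⟩ := hzα
  obtain ⟨hw1, hw2⟩ := hzβ
  have hπ := Real.pi_pos
  set K : ℝ := (k : ℝ) with hKdef
  set M : ℝ := (m : ℝ) with hMdef
  have hK : 0 ≤ K := by rw [hKdef]; exact_mod_cast hk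
  have hM : 0 ≤ M := by rw [hMdef]; exact_mod_cast hm
  -- not both zero
  have hKM : 0 < K ∨ 0 < M := by
    by_contra h
    push_neg at h
    have hK0 : K = 0 := le_antisymm h.1 hK
    have hM0 : M = 0 := le_antisymm h.2 hM
    have hb0 : b β₁ = 0 := by rw [hb, hK0, hM0]; ring
    rw [hb0, Real.cos_zero] at hw1
    norm_num at hw1
  set φ : ℝ → ℝ := fun θ => K / 2 + 2 * π * M * Real.sin θ with hφdef
  -- derivatives
  have hbe : b = fun θ => K * θ / 2 - 2 * π * M * Real.cos θ := funext hb
  have hbse : bstar = fun θ => (K + 12) * θ / 2 - 2 * π * M * Real.cos θ := funext hbstar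
  have hdb : ∀ θ, HasDerivAt b (φ θ) θ := by
    intro θ
    rw [hbe]
    have h1 : HasDerivAt (fun θ : ℝ => K * θ / 2) (K / 2) θ := by
      simpa using ((hasDerivAt_id θ).const_mul K).div_const 2
    have h2 : HasDerivAt (fun θ : ℝ => 2 * π * M * Real.cos θ)
        (2 * π * M * (-Real.sin θ)) θ := (Real.hasDerivAt_cos θ).const_mul (2 * π * M)
    have h3 := h1.sub h2
    convert h3 using 1
    show K / 2 + 2 * π * M * Real.sin θ = _; ring
    all_goals rfl
  have hdbs : ∀ θ, HasDerivAt bstar (φ θ + 6) θ := by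
    intro θ
    rw [hbse]
    have h1 : HasDerivAt (fun θ : ℝ => (K + 12) * θ / 2) ((K + 12) / 2) θ := by
      simpa using ((hasDerivAt_id θ).const_mul (K + 12)).div_const 2
    have h2 : HasDerivAt (fun θ : ℝ => 2 * π * M * Real.cos θ)
        (2 * π * M * (-Real.sin θ)) θ := (Real.hasDerivAt_cos θ).const_mul (2 * π * M)
    have h3 := h1.sub h2
    convert h3 using 1
    show K / 2 + 2 * π * M * Real.sin θ + 6 = _; ring
    all_goals rfl
  have hcb : Continuous b := by rw [hbe]; fun_prop
  have hcbs : Continuous bstar := by rw [hbse]; fun_prop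
  -- MVT helpers
  have mvtb : ∀ a c : ℝ, a < c → ∃ ξ ∈ Ioo a c, b c - b a = φ ξ * (c - a) := by
    intro a c hac
    obtain ⟨ξ, hξ, he⟩ := exists_hasDerivAt_eq_slope b φ hac hcb.continuousOn
      (fun x _ => hdb x)
    refine ⟨ξ, hξ, ?_⟩
    rw [he, div_mul_cancel₀]
    exact sub_ne_zero.2 hac.ne'
  have mvtbs : ∀ a c : ℝ, a < c → ∃ ξ ∈ Ioo a c, bstar c - bstar a = (φ ξ + 6) * (c - a) := by
    intro a c hac
    obtain ⟨ξ, hξ, he⟩ := exists_hasDerivAt_eq_slope bstar (fun θ => φ θ + 6) hac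
      hcbs.continuousOn (fun x _ => hdbs x)
    refine ⟨ξ, hξ, ?_⟩
    rw [he, div_mul_cancel₀]
    exact sub_ne_zero.2 hac.ne'
  -- sin antitone on the interval
  have hcossin : ∀ t : ℝ, Real.cos (t - π / 2) = Real.sin t := by
    intro t
    rw [← Real.cos_neg, show -(t - π / 2) = π / 2 - t by ring, Real.cos_pi_div_two_sub]
  have hsinmono : ∀ x y : ℝ, π / 2 ≤ x → x ≤ y → y ≤ 2 * π / 3 → Real.sin y ≤ Real.sin x := by
    intro x y hx hxy hy
    rw [← hcossin x, ← hcossin y]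
    exact Real.cos_le_cos_of_nonneg_of_le_pi (by linarith) (by linarith) (by linarith)
  have hsin23 : Real.sin (2 * π / 3) = Real.sqrt 3 / 2 := by
    rw [show 2 * π / 3 = π - π / 3 by ring, Real.sin_pi_sub, Real.sin_pi_div_three]
  have hs3 : (1.7 : ℝ) ≤ Real.sqrt 3 := by
    nlinarith [Real.sq_sqrt (by norm_num : (3:ℝ) ≥ 0), Real.sqrt_nonneg 3]
  have hsinlb : ∀ θ : ℝ, π / 2 ≤ θ → θ ≤ 2 * π / 3 → Real.sqrt 3 / 2 ≤ Real.sin θ := by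
    intro θ h1 h2
    rw [← hsin23]
    exact hsinmono θ (2 * π / 3) h1 h2 le_rfl
  have hφpos : ∀ θ : ℝ, π / 2 ≤ θ → θ ≤ 2 * π / 3 → 0 < φ θ := by
    intro θ h1 h2
    have hs := hsinlb θ h1 h2
    have hsθ : (0:ℝ) ≤ Real.sin θ := by nlinarith
    have h2πM : (0:ℝ) ≤ 2 * π * M := by positivity
    have hterm : 0 ≤ 2 * π * M * Real.sin θ := mul_nonneg h2πM hsθ
    rcases hKM with hKp | hMp
    · simp only [hφdef]; nlinarith
    · have hπM : (0:ℝ) < 2 * π * M := by positivity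
      have : 0 < 2 * π * M * Real.sin θ := by nlinarith
      simp only [hφdef]; nlinarith
  have hφanti : ∀ x y : ℝ, π / 2 ≤ x → x ≤ y → y ≤ 2 * π / 3 → φ y ≤ φ x := by
    intro x y hx hxy hy
    have h := hsinmono x y hx hxy hy
    have h2πM : (0:ℝ) ≤ 2 * π * M := by positivity
    have := mul_le_mul_of_nonneg_left h h2πM
    simp only [hφdef]
    linarith
  -- consecutive zero spacings
  have h13 : α₁ < α₂ := h12.trans h23
  have h24 : β₁ < β₂ := h23.trans h34
  have h35 : α₂ < α₃ := h34.trans h45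
  have h15 : α₁ < α₃ := h13.trans h35
  have bnds : ∀ x y ξ : ℝ, x ∈ Set.Ioo (π/2) (2*π/3) → y ∈ Set.Ioo (π/2) (2*π/3) →
      ξ ∈ Ioo x y → π / 2 ≤ ξ ∧ ξ ≤ 2 * π / 3 := by
    intro x y ξ hx hy hξ
    exact ⟨(hx.1.trans hξ.1).le, (hξ.2.trans hy.2).le⟩
  have E1 : bstar α₂ = bstar α₁ + π := by
    obtain ⟨ξ, hξ, he⟩ := mvtbs α₁ α₂ h13
    obtain ⟨hb1, hb2⟩ := bnds α₁ α₂ ξ hm1 hm3 hξ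
    have hp := hφpos ξ hb1 hb2
    have hlt : bstar α₁ < bstar α₂ := by
      have := mul_pos (by linarith : (0:ℝ) < φ ξ + 6) (sub_pos.2 h13)
      linarith
    exact consec_aux bstar α₁ α₂ h13 hcbs.continuousOn hlt hz1 hz2 hconsα₁
  have E2 : bstar α₃ = bstar α₂ + π := by
    obtain ⟨ξ, hξ, he⟩ := mvtbs α₂ α₃ h35
    obtain ⟨hb1, hb2⟩ := bnds α₂ α₃ ξ hm3 hm5 hξ
    have hp := hφpos ξ hb1 hb2
    have hlt : bstar α₂ < bstar α₃ := by
      have := mul_pos (by linarith : (0:ℝ) < φ ξ + 6) (sub_pos.2 h35)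
      linarith
    exact consec_aux bstar α₂ α₃ h35 hcbs.continuousOn hlt hz2 hz3 hconsα₂
  have E3 : b β₂ = b β₁ + π := by
    obtain ⟨ξ, hξ, he⟩ := mvtb β₁ β₂ h24
    obtain ⟨hb1, hb2⟩ := bnds β₁ β₂ ξ hm2 hm4 hξ
    have hp := hφpos ξ hb1 hb2
    have hlt : b β₁ < b β₂ := by
      have := mul_pos hp (sub_pos.2 h24)
      linarith
    exact consec_aux b β₁ β₂ h24 hcb.continuousOn hlt hw1 hw2 hconsβ
  have hdiff : ∀ θ : ℝ, bstar θ = b θ + 6 * θ := by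
    intro θ; rw [hb, hbstar]; ring
  -- Claim 1
  have claim1 : β₁ - α₁ < β₂ - α₂ := by
    obtain ⟨c₁, hc₁, ec₁⟩ := mvtbs α₁ β₁ h12
    obtain ⟨c₂, hc₂, ec₂⟩ := mvtb α₂ β₂ h34
    obtain ⟨hc₁a, hc₁b⟩ := bnds α₁ β₁ c₁ hm1 hm2 hc₁
    obtain ⟨hc₂a, hc₂b⟩ := bnds α₂ β₂ c₂ hm3 hm4 hc₂
    have key1 : φ c₂ * (β₂ - α₂) = (φ c₁ + 6) * (β₁ - α₁) + 6 * (α₂ - β₁) := by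
      have d1 := hdiff α₁; have d2 := hdiff α₂; have d3 := hdiff β₁
      linarith [ec₁, ec₂, E1, E3]
    have hAB : φ c₂ ≤ φ c₁ := hφanti c₁ c₂ hc₁a (by linarith [hc₁.2, hc₂.1]) hc₂b
    have hBpos : 0 < φ c₂ := hφpos c₂ hc₂a hc₂b
    nlinarith [mul_nonneg (sub_nonneg.2 hAB) (by linarith : (0:ℝ) ≤ β₁ - α₁)]
  -- the delicate bound: φ β₁ ≤ φ α₃ + 6
  have hbd : φ β₁ ≤ φ α₃ + 6 := by
    have h25 : β₁ < α₃ := h23.trans h35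
    -- MVT for sin
    obtain ⟨ξ, hξ, eξ⟩ := exists_hasDerivAt_eq_slope Real.sin Real.cos h25
      Real.continuous_sin.continuousOn (fun x _ => Real.hasDerivAt_sin x)
    have esin : Real.sin α₃ - Real.sin β₁ = Real.cos ξ * (α₃ - β₁) := by
      rw [eξ, div_mul_cancel₀]
      exact sub_ne_zero.2 h25.ne'
    obtain ⟨hξa, hξb⟩ := bnds β₁ α₃ ξ hm2 hm5 hξ
    have hcosξ : -(1/2 : ℝ) ≤ Real.cos ξ := by
      have h := Real.cos_le_cos_of_nonneg_of_le_pi (by linarith : (0:ℝ) ≤ ξ)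
        (by linarith : 2 * π / 3 ≤ π) hξb
      rw [show 2*π/3 = π - π/3 by ring, Real.cos_pi_sub, Real.cos_pi_div_three] at h
      linarith
    have hsd : Real.sin β₁ - Real.sin α₃ ≤ (1/2) * (α₃ - β₁) := by
      nlinarith [mul_nonneg (by linarith : (0:ℝ) ≤ Real.cos ξ + 1/2)
        (by linarith : (0:ℝ) ≤ α₃ - β₁), esin]
    -- interval length bound
    obtain ⟨c₅, hc₅, ec₅⟩ := mvtbs α₁ α₃ h15
    obtain ⟨hc₅a, hc₅b⟩ := bnds α₁ α₃ c₅ hm1 hm5 hc₅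
    have hsc₅ := hsinlb c₅ hc₅a hc₅b
    have hφc₅ : Real.sqrt 3 * π * M ≤ φ c₅ := by
      have hh := mul_le_mul_of_nonneg_left hsc₅ (show (0:ℝ) ≤ 2 * π * M by positivity)
      simp only [hφdef]; nlinarith [hh]
    have hlen : (Real.sqrt 3 * π * M + 6) * (α₃ - α₁) ≤ 2 * π := by
      have e2π : bstar α₃ - bstar α₁ = 2 * π := by linarith [E1, E2]
      nlinarith [mul_nonneg (sub_nonneg.2 hφc₅) (by linarith : (0:ℝ) ≤ α₃ - α₁), ec₅]
    have hpi4 := Real.pi_le_four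
    have hgoal : π * M * (α₃ - α₁) ≤ 6 := by
      have hchain : π * M * ((Real.sqrt 3 * π * M + 6) * (α₃ - α₁)) ≤ π * M * (2 * π) :=
        mul_le_mul_of_nonneg_left hlen (by positivity)
      nlinarith [mul_le_mul_of_nonneg_right (show 2*π ≤ 6 * Real.sqrt 3 by nlinarith)
        (show (0:ℝ) ≤ π * M by positivity)]
    -- combine
    have h2πM : 0 ≤ 2 * π * M := by positivity
    have hmul := mul_le_mul_of_nonneg_left hsd h2πM
    simp only [hφdef]
    nlinarith [mul_le_mul_of_nonneg_left (show α₃ - β₁ ≤ α₃ - α₁ by linarith)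
      (show (0:ℝ) ≤ π * M by positivity)]
  -- Claim 2
  have claim2 : α₂ - β₁ > α₃ - β₂ := by
    obtain ⟨c₃, hc₃, ec₃⟩ := mvtb β₁ α₂ h23
    obtain ⟨c₄, hc₄, ec₄⟩ := mvtbs β₂ α₃ h45
    obtain ⟨hc₃a, hc₃b⟩ := bnds β₁ α₂ c₃ hm2 hm3 hc₃
    obtain ⟨hc₄a, hc₄b⟩ := bnds β₂ α₃ c₄ hm4 hm5 hc₄
    have key2 : φ c₃ * (α₂ - β₁) = (φ c₄ + 6) * (α₃ - β₂) + 6 * (β₂ - α₂) := by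
      have d1 := hdiff α₂; have d2 := hdiff β₂
      linarith [ec₃, ec₄, E2, E3]
    have h1 : φ c₃ ≤ φ β₁ := hφanti β₁ c₃ hm2.1.le hc₃.1.le hc₃b
    have h2 : φ α₃ ≤ φ c₄ := hφanti c₄ α₃ hc₄a hc₄.2.le hm5.2.le
    have h3 : φ c₃ ≤ φ c₄ + 6 := by linarith
    have h4 : 0 < φ c₄ + 6 := by linarith [hφpos c₄ hc₄a hc₄b]
    nlinarith [mul_nonneg (sub_nonneg.2 h3) (by linarith : (0:ℝ) ≤ α₂ - β₁)]
  exact ⟨claim1, claim2⟩
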